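/- For a Fishburn tree T with maximum label k and Fishburn cover B_1...B_k, the maximal right path W_i indexed by i is diagonal (its first node lies on the leftmost path from the root) if and only if i ∈ B_i. -/
import Mathlib


inductive LTree where
  | nil : LTree
  | node : LTree → ℕ → LTree → LTree
deriving DecidableEq

namespace LTree

def size : LTree → ℕ
  | nil => 0
  | node L _ R => L.size + 1 + R.size

/-- The in-order sequence of labels. -/
def inorder : LTree → List ℕ
  | nil => []
  | node L r R => L.inorder ++ r :: R.inorder

/-- The maximum label (0 for the empty tree). -/
def maxL : LTree → ℕ
  | nil => 0
  | node L r R => max r (max L.maxL R.maxL)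

/-- Weakly decreasing along every root-to-leaf path. -/
def Decreasing : LTree → Prop
  | nil => True
  | node L r R => L.maxL ≤ r ∧ R.maxL ≤ r ∧ L.Decreasing ∧ R.Decreasing

/-- Strictly decreasing to the left: every label in a left subtree
is strictly smaller than the label of its parent. -/
def StrictLeft : LTree → Prop
  | nil => True
  | node L r R => L.maxL < r ∧ L.StrictLeft ∧ R.StrictLeft

/-- An endotree: decreasing, strictly decreasing to the left, labels in `[n]`. -/
def IsEndotree (T : LTree) : Prop :=
  T.Decreasing ∧ T.StrictLeft ∧ ∀ l ∈ T.inorder, 1 ≤ l ∧ l ≤ T.size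

/-- A regular endotree: the set of labels equals `[k]` for some `k ≤ n`. -/
def IsRegularEndotree (T : LTree) : Prop :=
  T.IsEndotree ∧ ∃ k ≤ T.size, ∀ l, l ∈ T.inorder ↔ (1 ≤ l ∧ l ≤ k)

end LTree

/-- An endofunction on `[n]`, identified with a word of length `n` over `[n]`. -/
def IsEndofun (x : List ℕ) : Prop := ∀ a ∈ x, 1 ≤ a ∧ a ≤ x.length

/-- A Cayley permutation: an endofunction whose image is `[k]` for some `k ≤ n`. -/
def IsCayley (x : List ℕ) : Prop :=
  IsEndofun x ∧ ∃ k ≤ x.length, ∀ j, j ∈ x ↔ (1 ≤ j ∧ j ≤ k)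

namespace LTree

/-- The list of (subtrees rooted at the) nodes of `T`, in in-order. -/
def nodes : LTree → List LTree
  | nil => []
  | node L r R => L.nodes ++ node L r R :: R.nodes

/-- Root label (0 for the empty tree). -/
def rootLabel : LTree → ℕ
  | nil => 0
  | node _ r _ => r

/-- Left subtree. -/
def leftT : LTree → LTree
  | nil => nil
  | node L _ _ => L

/-- Indices `i` (0-based) such that the `i`-th in-order node `v_{i+1}` is in
`treetops(T)`: either the first node or a node with nonempty left subtree. -/
def treetopsIdx (T : LTree) : Set ℕ :=
  {i | i < T.size ∧ (i = 0 ∨ (T.nodes.getD i nil).leftT ≠ nil)}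

/-- Indices `i` such that the label of the `i`-th in-order node does not occur
at any earlier in-order node. -/
def unseenIdx (T : LTree) : Set ℕ :=
  {i | i < T.size ∧
    ∀ j < i, (T.nodes.getD j nil).rootLabel ≠ (T.nodes.getD i nil).rootLabel}

/-- A Fishburn tree: a regular endotree with `treetops(T) = unseen(T)`. -/
def IsFishburnTree (T : LTree) : Prop :=
  T.IsRegularEndotree ∧ treetopsIdx T = unseenIdx T

end LTree

namespace LTree

/-- The subtree at a position (path from the root: `false` = left, `true` = right). -/
def subtreeAt : LTree → List Bool → Option LTree
  | t, [] => some t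
  | nil, _ :: _ => none
  | node L _ _, false :: q => L.subtreeAt q
  | node _ _ R, true :: q => R.subtreeAt q

/-- `p` is the position of a node of `T`. -/
def IsNodePos (T : LTree) (p : List Bool) : Prop :=
  ∃ L r R, T.subtreeAt p = some (node L r R)

/-- The label of the node at position `p` (0 if there is no node there). -/
def labelAt (T : LTree) (p : List Bool) : ℕ :=
  match T.subtreeAt p with
  | some t => t.rootLabel
  | none => 0

/-- `p` lies on the diagonal of `T`, i.e. on the maximal left path from the root. -/
def OnDiag (p : List Bool) : Prop := ∀ b ∈ p, b = false

/-- The node at position `p` is a treetop: the first in-order node (the deepest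
node of the diagonal) or a node with a left child. -/
def PosTreetop (T : LTree) (p : List Bool) : Prop :=
  IsNodePos T p ∧ (IsNodePos T (p ++ [false]) ∨ OnDiag p)

/-- Auxiliary computation of the index of the maximal right path through a node:
the state records whether the current node is on the diagonal and the current
path index. -/
def blabelAux : LTree → Bool → ℕ → List Bool → ℕ
  | _, _, cur, [] => cur
  | nil, _, _, _ :: _ => 0
  | node _ _ R, _, cur, true :: q => blabelAux R false cur q
  | node L r _, d, _, false :: q =>
      blabelAux L d (if d then L.rootLabel else r) q

/-- The index `b(u)` of the maximal right path containing the node at `p`: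
`b(root) = ℓ(root)`; `b(right child of u) = b(u)`; `b(left child of u)` is
`ℓ(left child)` if `u` is diagonal and `ℓ(u)` otherwise. -/
def blabel (T : LTree) (p : List Bool) : ℕ :=
  blabelAux T true T.rootLabel p

/-- The list of positions of the nodes of `T`. -/
def positions : LTree → List (List Bool)
  | nil => []
  | node L _ R =>
      [] :: (L.positions.map (List.cons false) ++ R.positions.map (List.cons true))

end LTree

namespace LTree

lemma maxL_subtreeAt : ∀ (p : List Bool) (T t : LTree),
    T.subtreeAt p = some t → t.maxL ≤ T.maxL := by
  intro p
  induction p with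
  | nil => intro T t h; simp [subtreeAt] at h; subst h; exact le_refl _
  | cons b q ih =>
    intro T t h
    cases T with
    | nil => simp [subtreeAt] at h
    | node L r R =>
      cases b with
      | false =>
        simp only [subtreeAt] at h
        exact le_trans (ih L t h) (by simp [maxL])
      | true =>
        simp only [subtreeAt] at h
        exact le_trans (ih R t h) (by simp [maxL])

lemma blabelAux_diag : ∀ (p : List Bool) (T t : LTree), (∀ b ∈ p, b = false) →
    T.subtreeAt p = some t → blabelAux T true T.rootLabel p = t.rootLabel := by
  intro p
  induction p with
  | nil => intro T t _ h; simp [subtreeAt] at h; subst h; simp [blabelAux]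
  | cons b q ih =>
    intro T t hb h
    have hb0 : b = false := hb b (by simp)
    subst hb0
    cases T with
    | nil => simp [subtreeAt] at h
    | node L r R =>
      simp only [subtreeAt] at h
      simpa [blabelAux] using ih L t (fun x hx => hb x (by simp [hx])) h

lemma blabelAux_false : ∀ (q : List Bool) (T t : LTree) (cur : ℕ), T.StrictLeft →
    T.subtreeAt q = some t →
    ((∀ b ∈ q, b = true) ∧ blabelAux T false cur q = cur) ∨
      t.maxL < blabelAux T false cur q := by
  intro q
  induction q with
  | nil =>
    intro T t cur _ h; simp [subtreeAt] at h; subst h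
    left; exact ⟨by simp, by simp [blabelAux]⟩
  | cons b q ih =>
    intro T t cur hs h
    cases T with
    | nil => simp [subtreeAt] at h
    | node L r R =>
      obtain ⟨h1, h2, h3⟩ := hs
      cases b with
      | true =>
        simp only [subtreeAt] at h
        rcases ih R t cur h3 h with ⟨ha, hb⟩ | hlt
        · left
          refine ⟨?_, by simpa [blabelAux] using hb⟩
          intro x hx
          rcases List.mem_cons.mp hx with h' | h'
          · exact h'
          · exact ha x h'
        · right; simpa [blabelAux] using hlt
      | false =>
        simp only [subtreeAt] at h
        rcases ih L t r h2 h with ⟨ha, hb⟩ | hlt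
        · right
          have : blabelAux (node L r R) false cur (false :: q) = r := by
            simpa [blabelAux] using hb
          rw [this]
          exact lt_of_le_of_lt (maxL_subtreeAt q L t h) h1
        · right; simpa [blabelAux] using hlt

lemma blabel_main : ∀ (p : List Bool) (T t : LTree), T.StrictLeft →
    T.subtreeAt p = some t → t ≠ nil →
    (∃ q L' r' R', (∀ b ∈ q, b = false) ∧ T.subtreeAt q = some (node L' r' R') ∧
       blabelAux T true T.rootLabel p = r') ∨
    t.maxL < blabelAux T true T.rootLabel p := by
  intro p
  induction p with
  | nil =>
    intro T t hs h hne
    simp [subtreeAt] at h; subst h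
    cases T with
    | nil => exact absurd rfl hne
    | node L r R => left; exact ⟨[], L, r, R, by simp, rfl, rfl⟩
  | cons b q ih =>
    intro T t hs h hne
    cases T with
    | nil => simp [subtreeAt] at h
    | node L r R =>
      obtain ⟨h1, h2, h3⟩ := hs
      cases b with
      | false =>
        simp only [subtreeAt] at h
        rcases ih L t h2 h hne with ⟨q', L', r', R', hq0, hq1, hq2⟩ | hlt
        · left
          refine ⟨false :: q', L', r', R', ?_, by simpa [subtreeAt] using hq1,
            by simpa [blabelAux] using hq2⟩
          intro x hx
          rcases List.mem_cons.mp hx with h' | h'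
          · exact h'
          · exact hq0 x h'
        · right; simpa [blabelAux] using hlt
      | true =>
        simp only [subtreeAt] at h
        rcases blabelAux_false q R t r h3 h with ⟨ha, hb⟩ | hlt
        · left
          exact ⟨[], L, r, R, by simp, rfl, by simpa [blabelAux, rootLabel] using hb⟩
        · right; simpa [blabelAux, rootLabel] using hlt

end LTree

/-- in a Fishburn tree with maximum label `k` and Fishburn cover
`B_1 … B_k`, the maximal right path `W_i` is diagonal (contains a node on the
leftmost path from the root) if and only if `i ∈ B_i` (some node of `W_i` has
label `i`). -/
theorem fishburn_diagonal_iff (T : LTree) (h : T.IsFishburnTree)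
    (i : ℕ) (h1 : 1 ≤ i) (h2 : i ≤ T.maxL) :
    (∃ p, T.IsNodePos p ∧ LTree.OnDiag p ∧ T.blabel p = i) ↔
      (∃ p, T.IsNodePos p ∧ T.blabel p = i ∧ T.labelAt p = i) := by
  have hsl : T.StrictLeft := h.1.1.2.1
  constructor
  · rintro ⟨p, hpos, hdiag, hb⟩
    obtain ⟨L, r, R, hsub⟩ := hpos
    have hl : T.labelAt p = i := by
      have := LTree.blabelAux_diag p T (LTree.node L r R) hdiag hsub
      unfold LTree.blabel at hb
      rw [this] at hb
      simpa [LTree.labelAt, hsub] using hb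
    exact ⟨p, ⟨L, r, R, hsub⟩, hb, hl⟩
  · rintro ⟨p, hpos, hb, hl⟩
    obtain ⟨L, r, R, hsub⟩ := hpos
    have hri : r = i := by simpa [LTree.labelAt, hsub, LTree.rootLabel] using hl
    rcases LTree.blabel_main p T (LTree.node L r R) hsl hsub (fun h => by cases h) with
      ⟨q, L', r', R', hq0, hq1, hq2⟩ | hlt
    · refine ⟨q, ⟨L', r', R', hq1⟩, hq0, ?_⟩
      have : T.blabel q = r' := by
        have := LTree.blabelAux_diag q T (LTree.node L' r' R') hq0 hq1
        simpa [LTree.blabel, LTree.rootLabel] using this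
      rw [this, ← hq2]
      exact hb
    · exfalso
      unfold LTree.blabel at hb
      rw [hb] at hlt
      have : r ≤ (LTree.node L r R).maxL := by simp [LTree.maxL]
      omega
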